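/- Let k_c : [0,∞)×[0,∞) → ℝ be continuous and symmetric (k_c(x,y) = k_c(y,x)), and let u : [0,∞) → ℝ be continuous and compactly supported. Define C(u)(x) = ∫_0^x ∫_{x−y}^∞ y · k_c(y,z) u(y) u(z) dz dy. Then C(u) is differentiable on (0,∞) and for every x > 0, (d/dx) C(u)(x) = −x · Q_c(u)(x); that is, the coagulation operator admits the conservative form x·Q_c(u) = −∂_x C(u). -/

import Mathlib

open MeasureTheory

/-- The coagulation operator:
`Q_c(u)(x) = (1/2)∫_0^x k_c(y, x−y) u(y) u(x−y) dy − u(x) ∫_0^∞ k_c(x,y) u(y) dy`. -/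
noncomputable def Qc (kc : ℝ → ℝ → ℝ) (u : ℝ → ℝ) (x : ℝ) : ℝ :=
  (1 / 2) * (∫ y in (0:ℝ)..x, kc y (x - y) * u y * u (x - y))
    - u x * ∫ y in Set.Ioi (0:ℝ), kc x y * u y

/-- The conservative coagulation flux:
`C(u)(x) = ∫_0^x ∫_{x−y}^∞ y · k_c(y,z) u(y) u(z) dz dy`. -/
noncomputable def coagFlux (kc : ℝ → ℝ → ℝ) (u : ℝ → ℝ) (x : ℝ) : ℝ :=
  ∫ y in (0:ℝ)..x, ∫ z in Set.Ioi (x - y), y * kc y z * u y * u z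

/-- the coagulation operator admits the conservative form
`x·Q_c(u) = −∂_x C(u)` on `(0,∞)`. -/
theorem coagulation_conservative_form
    (kc : ℝ → ℝ → ℝ) (u : ℝ → ℝ)
    (hkc_cont : ContinuousOn (fun p : ℝ × ℝ => kc p.1 p.2) (Set.Ici 0 ×ˢ Set.Ici 0))
    (hkc_symm : ∀ x ∈ Set.Ici (0:ℝ), ∀ y ∈ Set.Ici (0:ℝ), kc x y = kc y x)
    (hu_cont : ContinuousOn u (Set.Ici 0))
    (hu_supp : ∃ M : ℝ, 0 < M ∧ ∀ x ≥ M, u x = 0) :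
    ∀ x > (0:ℝ), HasDerivAt (coagFlux kc u) (-(x * Qc kc u x)) x := by
  obtain ⟨M, hM0, hMz⟩ := hu_supp
  intro x hx
  -- continuous extensions of `u` and `kc` to the whole line / plane
  set v : ℝ → ℝ := fun y => u (max y 0) with hv_def
  have hv_cont : Continuous v :=
    hu_cont.comp_continuous (continuous_id.max continuous_const) fun y => le_max_right y 0
  have hv_eq : ∀ y : ℝ, 0 ≤ y → v y = u y := fun y hy => by
    simp [hv_def, max_eq_left hy]
  have hv_zero : ∀ y : ℝ, M ≤ y → v y = 0 := by
    intro y hy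
    rw [hv_eq y (le_trans hM0.le hy)]
    exact hMz y hy
  set K : ℝ → ℝ → ℝ := fun y z => kc (max y 0) (max z 0) with hK_def
  have hK_cont : Continuous fun p : ℝ × ℝ => K p.1 p.2 :=
    hkc_cont.comp_continuous
      ((continuous_fst.max continuous_const).prodMk (continuous_snd.max continuous_const))
      (fun p => ⟨Set.mem_Ici.mpr (le_max_right p.1 0), Set.mem_Ici.mpr (le_max_right p.2 0)⟩)
  have hK_eq : ∀ y z : ℝ, 0 ≤ y → 0 ≤ z → K y z = kc y z := fun y z hy hz => by
    simp [hK_def, max_eq_left hy, max_eq_left hz]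
  have hK_symm : ∀ y z : ℝ, K y z = K z y := fun y z =>
    hkc_symm _ (Set.mem_Ici.mpr (le_max_right y 0)) _ (Set.mem_Ici.mpr (le_max_right z 0))
  set W : ℝ → ℝ → ℝ := fun y z => y * K y z * v y * v z with hW_def
  have hW_cont : Continuous fun p : ℝ × ℝ => W p.1 p.2 :=
    ((continuous_fst.mul hK_cont).mul (hv_cont.comp continuous_fst)).mul
      (hv_cont.comp continuous_snd)
  have hW_cont_left : ∀ y : ℝ, Continuous (W y) := fun y =>
    hW_cont.comp ((continuous_const.prodMk continuous_id :
      Continuous fun z : ℝ => (y, z)))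
  have hW_zero : ∀ y z : ℝ, M ≤ z → W y z = 0 := fun y z hz => by
    simp [hW_def, hv_zero z hz]
  -- integrability of the inner integrand on half-lines
  have hW_int : ∀ y t : ℝ, IntegrableOn (W y) (Set.Ioi t) := by
    intro y t
    have hsub : Set.Ioi t ⊆ Set.Ioc t M ∪ Set.Ioi M := by
      intro z hz
      rcases le_or_gt z M with h | h
      · exact Or.inl ⟨hz, h⟩
      · exact Or.inr h
    refine (IntegrableOn.union ?_ ?_).mono_set hsub
    · exact (hW_cont_left y).integrableOn_Ioc
    · exact integrableOn_zero.congr_fun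
        (fun z hz => (hW_zero y z (le_of_lt hz)).symm) measurableSet_Ioi
  set f : ℝ → ℝ := fun y => ∫ z in Set.Ioi (0:ℝ), W y z with hf_def
  have hsplit_inner : ∀ y t : ℝ, 0 ≤ t →
      f y = (∫ z in (0:ℝ)..t, W y z) + ∫ z in Set.Ioi t, W y z := by
    intro y t ht
    rw [intervalIntegral.integral_of_le ht,
      ← MeasureTheory.setIntegral_union (Set.Ioc_disjoint_Ioi le_rfl) measurableSet_Ioi
        ((hW_int y 0).mono_set Set.Ioc_subset_Ioi_self) (hW_int y t),
      Set.Ioc_union_Ioi_eq_Ioi ht]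
  have hf_interval : ∀ y : ℝ, f y = ∫ z in (0:ℝ)..M, W y z := by
    intro y
    rw [hsplit_inner y M hM0.le]
    have h0 : Set.EqOn (W y) (fun _ => (0:ℝ)) (Set.Ioi M) := fun z hz => hW_zero y z hz.le
    rw [MeasureTheory.setIntegral_congr_fun measurableSet_Ioi h0]
    simp
  have hf_cont : Continuous f := by
    rw [show f = fun y => ∫ z in (0:ℝ)..M, W y z from funext hf_interval]
    exact intervalIntegral.continuous_parametric_intervalIntegral_of_continuous'
      (f := W) hW_cont 0 M
  set g : ℝ → ℝ := fun s => ∫ y in (0:ℝ)..s, W y (s - y) with hg_def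
  have hg_cont : Continuous g := by
    apply intervalIntegral.continuous_parametric_intervalIntegral_of_continuous
      (f := fun s y => W y (s - y)) ?_ continuous_id
    exact hW_cont.comp (continuous_snd.prodMk (continuous_fst.sub continuous_snd))
  -- the representation of the flux valid on all of (0,∞)
  have heq : ∀ b ∈ Set.Ioi (0:ℝ),
      coagFlux kc u b = (∫ y in (0:ℝ)..b, f y) - ∫ t in (0:ℝ)..b, g t := by
    intro b hb
    have hb0 : (0:ℝ) < b := hb
    have step1 : coagFlux kc u b
        = ∫ y in (0:ℝ)..b, (f y - ∫ z in (0:ℝ)..(b - y), W y z) := by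
      apply intervalIntegral.integral_congr
      intro y hy
      rw [Set.uIcc_of_le hb0.le] at hy
      obtain ⟨hy0, hyb⟩ := hy
      have hby : (0:ℝ) ≤ b - y := by linarith
      have e1 : (∫ z in Set.Ioi (b - y), y * kc y z * u y * u z)
          = ∫ z in Set.Ioi (b - y), W y z := by
        apply MeasureTheory.setIntegral_congr_fun measurableSet_Ioi
        intro z hz
        have hz0 : (0:ℝ) ≤ z := le_of_lt (lt_of_le_of_lt hby hz)
        simp only [hW_def]
        rw [hK_eq y z hy0 hz0, hv_eq y hy0, hv_eq z hz0]
      show (∫ z in Set.Ioi (b - y), y * kc y z * u y * u z)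
          = f y - ∫ z in (0:ℝ)..(b - y), W y z
      rw [e1, hsplit_inner y (b - y) hby]
      ring
    have hcont2 : Continuous fun y => ∫ z in (0:ℝ)..(b - y), W y z :=
      intervalIntegral.continuous_parametric_intervalIntegral_of_continuous
        (f := W) hW_cont (continuous_const.sub continuous_id)
    have step2 : (∫ y in (0:ℝ)..b, (f y - ∫ z in (0:ℝ)..(b - y), W y z))
        = (∫ y in (0:ℝ)..b, f y) - ∫ y in (0:ℝ)..b, ∫ z in (0:ℝ)..(b - y), W y z :=
      intervalIntegral.integral_sub (hf_cont.intervalIntegrable 0 b)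
        (hcont2.intervalIntegrable 0 b)
    -- Fubini on the triangle
    set H : ℝ → ℝ → ℝ := fun y s => W y (s - y) with hH_def
    have step3 : (∫ y in (0:ℝ)..b, ∫ z in (0:ℝ)..(b - y), W y z)
        = ∫ t in (0:ℝ)..b, g t := by
      have e1 : ∀ y : ℝ, (∫ z in (0:ℝ)..(b - y), W y z) = ∫ s in y..b, H y s := by
        intro y
        have := intervalIntegral.integral_comp_sub_right (W y) y (a := y) (b := b)
        rw [sub_self] at this
        exact this.symm
      have eL : (∫ y in (0:ℝ)..b, ∫ z in (0:ℝ)..(b - y), W y z)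
          = ∫ y in Set.Ioc (0:ℝ) b, ∫ s in Set.Ioc (0:ℝ) b,
              (Set.Ioi y).indicator (H y) s := by
        rw [intervalIntegral.integral_of_le hb0.le]
        apply MeasureTheory.setIntegral_congr_fun measurableSet_Ioc
        intro y hy
        show (∫ z in (0:ℝ)..(b - y), W y z)
            = ∫ s in Set.Ioc (0:ℝ) b, (Set.Ioi y).indicator (H y) s
        have eset : Set.Ioc (0:ℝ) b ∩ Set.Ioi y = Set.Ioc y b := by
          ext s
          simp only [Set.mem_Ioc, Set.mem_inter_iff, Set.mem_Ioi]
          constructor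
          · intro h; exact ⟨h.2, h.1.2⟩
          · intro h; exact ⟨⟨lt_trans hy.1 h.1, h.2⟩, h.1⟩
        rw [e1 y, intervalIntegral.integral_of_le hy.2,
          MeasureTheory.setIntegral_indicator measurableSet_Ioi, eset]
      have hInt : Integrable (Function.uncurry fun y s => (Set.Ioi y).indicator (H y) s)
          ((volume.restrict (Set.Ioc (0:ℝ) b)).prod (volume.restrict (Set.Ioc (0:ℝ) b))) := by
        have heqind : (Function.uncurry fun y s => (Set.Ioi y).indicator (H y) s)
            = Set.indicator {p : ℝ × ℝ | p.1 < p.2} (fun p => H p.1 p.2) := by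
          funext p
          simp [Function.uncurry, Set.indicator_apply]
        rw [heqind, MeasureTheory.Measure.prod_restrict]
        apply Integrable.indicator ?_ (measurableSet_lt measurable_fst measurable_snd)
        have hHc : Continuous fun p : ℝ × ℝ => H p.1 p.2 :=
          hW_cont.comp (continuous_fst.prodMk (continuous_snd.sub continuous_fst))
        have h1 : IntegrableOn (fun p : ℝ × ℝ => H p.1 p.2)
            (Set.Icc (0:ℝ) b ×ˢ Set.Icc (0:ℝ) b) (volume.prod volume) := by
          rw [← MeasureTheory.Measure.volume_eq_prod]
          exact hHc.continuousOn.integrableOn_compact (isCompact_Icc.prod isCompact_Icc)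
        exact h1.mono_set (Set.prod_mono Set.Ioc_subset_Icc_self Set.Ioc_subset_Icc_self)
      have eswap := MeasureTheory.integral_integral_swap hInt
      have eR : (∫ s in Set.Ioc (0:ℝ) b, ∫ y in Set.Ioc (0:ℝ) b,
            (Set.Ioi y).indicator (H y) s) = ∫ t in (0:ℝ)..b, g t := by
        rw [intervalIntegral.integral_of_le hb0.le]
        apply MeasureTheory.setIntegral_congr_fun measurableSet_Ioc
        intro s hs
        show (∫ y in Set.Ioc (0:ℝ) b, (Set.Ioi y).indicator (H y) s) = g s
        have e2 : (fun y => (Set.Ioi y).indicator (H y) s)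
            = fun y => (Set.Iio s).indicator (fun y' => H y' s) y := by
          funext y
          simp [Set.indicator_apply]
        rw [e2, MeasureTheory.setIntegral_indicator measurableSet_Iio]
        have e3 : Set.Ioc (0:ℝ) b ∩ Set.Iio s = Set.Ioo 0 s := by
          ext y
          simp only [Set.mem_Ioc, Set.mem_inter_iff, Set.mem_Iio, Set.mem_Ioo]
          constructor
          · intro h; exact ⟨h.1.1, h.2⟩
          · intro h; exact ⟨⟨h.1, le_trans h.2.le hs.2⟩, h.2⟩
        rw [e3, ← MeasureTheory.integral_Ioc_eq_integral_Ioo,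
          ← intervalIntegral.integral_of_le hs.1.le]
      rw [eL, eswap, eR]
    rw [step1, step2, step3]
  -- derivative of the representation
  have hA : HasDerivAt (fun s => ∫ y in (0:ℝ)..s, f y) (f x) x :=
    intervalIntegral.integral_hasDerivAt_right (hf_cont.intervalIntegrable 0 x)
      (hf_cont.stronglyMeasurableAtFilter _ _) hf_cont.continuousAt
  have hG : HasDerivAt (fun s => ∫ t in (0:ℝ)..s, g t) (g x) x :=
    intervalIntegral.integral_hasDerivAt_right (hg_cont.intervalIntegrable 0 x)
      (hg_cont.stronglyMeasurableAtFilter _ _) hg_cont.continuousAt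
  have hAB : HasDerivAt (fun s => (∫ y in (0:ℝ)..s, f y) - ∫ t in (0:ℝ)..s, g t)
      (f x - g x) x := hA.sub hG
  -- value computations
  have hfx : f x = x * u x * ∫ z in Set.Ioi (0:ℝ), kc x z * u z := by
    have h0 : Set.EqOn (W x) (fun z => (x * u x) * (kc x z * u z)) (Set.Ioi 0) := by
      intro z hz
      have hz0 : (0:ℝ) ≤ z := le_of_lt hz
      simp only [hW_def]
      rw [hK_eq x z hx.le hz0, hv_eq x hx.le, hv_eq z hz0]
      ring
    have h1 : f x = ∫ z in Set.Ioi (0:ℝ), (x * u x) * (kc x z * u z) :=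
      MeasureTheory.setIntegral_congr_fun measurableSet_Ioi h0
    rw [h1, MeasureTheory.integral_const_mul]
  have hgx : g x = (x / 2) * ∫ y in (0:ℝ)..x, kc y (x - y) * u y * u (x - y) := by
    set φ : ℝ → ℝ := fun y => K y (x - y) * v y * v (x - y) with hφ_def
    have hφc : Continuous φ :=
      ((hK_cont.comp (continuous_id.prodMk (continuous_const.sub continuous_id))).mul
        hv_cont).mul (hv_cont.comp (continuous_const.sub continuous_id))
    have hφ : ∀ y : ℝ, φ (x - y) = φ y := by
      intro y
      simp only [hφ_def, sub_sub_cancel]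
      rw [hK_symm]
      ring
    have h1 : g x = ∫ y in (0:ℝ)..x, y * φ y := by
      apply intervalIntegral.integral_congr
      intro y _
      simp only [hW_def, hφ_def]
      ring
    have h2 : (∫ y in (0:ℝ)..x, y * φ y) = ∫ y in (0:ℝ)..x, (x - y) * φ y := by
      have e := intervalIntegral.integral_comp_sub_left (fun y => y * φ y) x
        (a := 0) (b := x)
      rw [sub_self, sub_zero] at e
      rw [← e]
      apply intervalIntegral.integral_congr
      intro y _
      show (x - y) * φ (x - y) = (x - y) * φ y
      rw [hφ y]
    have h3 : (2:ℝ) * ∫ y in (0:ℝ)..x, y * φ y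
        = x * ∫ y in (0:ℝ)..x, φ y := by
      have hi1 : IntervalIntegrable (fun y => y * φ y) volume 0 x :=
        (continuous_id.mul hφc).intervalIntegrable 0 x
      have hi2 : IntervalIntegrable (fun y => (x - y) * φ y) volume 0 x :=
        ((continuous_const.sub continuous_id).mul hφc).intervalIntegrable 0 x
      rw [two_mul]
      nth_rewrite 2 [h2]
      rw [← intervalIntegral.integral_add hi1 hi2, ← intervalIntegral.integral_const_mul]
      apply intervalIntegral.integral_congr
      intro y _
      ring
    have h4 : (∫ y in (0:ℝ)..x, φ y)
        = ∫ y in (0:ℝ)..x, kc y (x - y) * u y * u (x - y) := by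
      apply intervalIntegral.integral_congr
      intro y hy
      rw [Set.uIcc_of_le hx.le] at hy
      obtain ⟨hy0, hyx⟩ := hy
      have hxy : (0:ℝ) ≤ x - y := by linarith
      simp only [hφ_def]
      rw [hK_eq y (x - y) hy0 hxy, hv_eq y hy0, hv_eq (x - y) hxy]
    rw [h1, ← h4]
    linarith [h3]
  have hval : f x - g x = -(x * Qc kc u x) := by
    rw [hfx, hgx, Qc]
    ring
  have hmem : Set.Ioi (0:ℝ) ∈ nhds x := isOpen_Ioi.mem_nhds hx
  have hev : (fun s => (∫ y in (0:ℝ)..s, f y) - ∫ t in (0:ℝ)..s, g t)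
      =ᶠ[nhds x] coagFlux kc u :=
    Filter.eventuallyEq_of_mem hmem fun b hb => (heq b hb).symm
  exact hev.hasDerivAt_iff.mp (hval ▸ hAB)
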